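/- Let φ(x) = Σ_{i≥0} a_i x^i be a function analytic on a neighborhood of [0,∞), and let i_1 < i_2 < ⋯ < i_ℓ be distinct indices with a_{i_t} ≠ 0 for t = 1,…,ℓ. Then the ℓ functions x ↦ x^{i_t} φ^{(i_t)}(x) on (0,∞), t = 1,…,ℓ, are linearly independent over ℂ; equivalently, the complex vector space they span has dimension ℓ. -/

import Mathlib

/-!
Statement 4: if `φ(x) = Σ a_i x^i` is analytic on a neighborhood of `[0,∞)` and
`i_1 < ⋯ < i_ℓ` are indices with `a_{i_t} ≠ 0`, then the functions
`x ↦ x^{i_t} φ^{(i_t)}(x)` on `(0,∞)` are linearly independent over `ℂ`.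
(Note `a_i = φ^{(i)}(0)/i!`, so `a_i ≠ 0 ↔ iteratedDeriv i φ 0 ≠ 0`.)
-/

/-- If `φ` is analytic at `0`, then each iterated derivative is continuous at `0`. -/
lemma continuousAt_iteratedDeriv_of_analyticAt (φ : ℝ → ℂ) (h0 : AnalyticAt ℝ φ 0)
    (n : ℕ) : ContinuousAt (iteratedDeriv n φ) 0 := by
  obtain ⟨u, hu, hanal⟩ := h0.eventually_analyticAt.exists_mem
  have hA : AnalyticOnNhd ℝ φ u := fun y hy => hanal y hy
  have hF : AnalyticAt ℝ (iteratedFDeriv ℝ n φ) 0 :=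
    (hA.iteratedFDeriv n) 0 (mem_of_mem_nhds hu)
  have hC : ContinuousAt (iteratedFDeriv ℝ n φ) 0 := hF.continuousAt
  rw [iteratedDeriv_eq_equiv_comp]
  exact ((ContinuousMultilinearMap.piFieldEquiv ℝ (Fin n) ℂ).symm.continuous.continuousAt.comp hC)

theorem xj_phij_linearIndependent
    (φ : ℝ → ℂ) (hφ : ∀ x ∈ Set.Ici (0 : ℝ), AnalyticAt ℝ φ x)
    (ℓ : ℕ) (ι : Fin ℓ → ℕ) (hmono : StrictMono ι)
    (hne : ∀ t : Fin ℓ, iteratedDeriv (ι t) φ 0 ≠ 0) :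
    LinearIndependent ℂ
      (fun t : Fin ℓ => fun x : Set.Ioi (0 : ℝ) =>
        ((x : ℝ) : ℂ) ^ (ι t) * iteratedDeriv (ι t) φ (x : ℝ)) := by
  have hD : ∀ n : ℕ, ContinuousAt (iteratedDeriv n φ) 0 :=
    continuousAt_iteratedDeriv_of_analyticAt φ (hφ 0 (by simp))
  rw [Fintype.linearIndependent_iff]
  intro c hc
  have hsum : ∀ x : ℝ, 0 < x →
      ∑ t : Fin ℓ, c t * (((x : ℝ) : ℂ) ^ (ι t) * iteratedDeriv (ι t) φ x) = 0 := by
    intro x hx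
    have := congrFun hc (⟨x, hx⟩ : Set.Ioi (0 : ℝ))
    simpa using this
  have key : ∀ s : Fin ℓ, (∀ r : Fin ℓ, r < s → c r = 0) → c s = 0 := by
    intro s ih
    set F : ℝ → ℂ :=
      fun x => ∑ t : Fin ℓ, c t * ((x : ℂ) ^ (ι t - ι s) * iteratedDeriv (ι t) φ x) with hF
    have hF0 : ∀ x : ℝ, 0 < x → F x = 0 := by
      intro x hx
      have hx' : ((x : ℝ) : ℂ) ≠ 0 := by exact_mod_cast hx.ne'
      have hmul : ((x : ℝ) : ℂ) ^ (ι s) * F x = 0 := by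
        rw [hF, Finset.mul_sum, ← hsum x hx]
        apply Finset.sum_congr rfl
        intro t _
        rcases lt_or_ge t s with h | h
        · rw [ih t h]; ring
        · have hle : ι s + (ι t - ι s) = ι t := by
            have := hmono.le_iff_le.mpr h; omega
          rw [← hle, pow_add]
          simp only [Nat.add_sub_cancel_left]
          ring
      exact (mul_eq_zero.mp hmul).resolve_left (pow_ne_zero _ hx')
    have hlim : Filter.Tendsto F (nhdsWithin 0 (Set.Ioi (0:ℝ)))
        (nhds (c s * iteratedDeriv (ι s) φ 0)) := by
      have hcont : Filter.Tendsto F (nhds (0:ℝ))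
          (nhds (∑ t : Fin ℓ, c t * ((0 : ℂ) ^ (ι t - ι s) * iteratedDeriv (ι t) φ 0))) := by
        rw [hF]
        apply tendsto_finset_sum
        intro t _
        have hct : ContinuousAt
            (fun x : ℝ => c t * (((x : ℝ) : ℂ) ^ (ι t - ι s) * iteratedDeriv (ι t) φ x)) 0 :=
          continuousAt_const.mul
            (((Complex.continuous_ofReal.continuousAt).pow _).mul (hD (ι t)))
        simpa using hct.tendsto
      have hval : ∑ t : Fin ℓ, c t * ((0 : ℂ) ^ (ι t - ι s) * iteratedDeriv (ι t) φ 0)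
          = c s * iteratedDeriv (ι s) φ 0 := by
        rw [Finset.sum_eq_single s]
        · simp
        · intro t _ hts
          rcases lt_or_gt_of_ne hts with h | h
          · rw [ih t h]; ring
          · have : 0 < ι t - ι s := by
              have := hmono h
              omega
            rw [zero_pow this.ne']
            ring
        · intro h; exact absurd (Finset.mem_univ s) h
      rw [hval] at hcont
      exact hcont.mono_left nhdsWithin_le_nhds
    have hlim0 : Filter.Tendsto F (nhdsWithin 0 (Set.Ioi (0:ℝ))) (nhds (0 : ℂ)) := by
      have : F =ᶠ[nhdsWithin 0 (Set.Ioi (0:ℝ))] (fun _ => (0:ℂ)) := by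
        filter_upwards [self_mem_nhdsWithin] with x hx
        exact hF0 x hx
      exact Filter.Tendsto.congr' this.symm tendsto_const_nhds
    have := tendsto_nhds_unique hlim hlim0
    exact (mul_eq_zero.mp this).resolve_right (hne s)
  suffices h : ∀ n : ℕ, ∀ s : Fin ℓ, s.val = n → c s = 0 by
    intro s; exact h s.val s rfl
  intro n
  induction n using Nat.strongRecOn with
  | ind n ihn =>
    intro s hs
    exact key s (fun r hr => ihn r.val (hs ▸ hr) r rfl)
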